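/- For sample size n, suppose the AIC values IC_1, …, IC_M of M candidate models satisfy IC_m − IC_{m*} = (n+1) Δ_m + 2 (p_m − p_{m*}) + ε_{m,n} with each ε_{m,n} = O_p(1), where m* attains the smallest KLIC, and let the tied set K_min = {m : Δ_m = 0} possibly contain several models, with Δ° = min_{m ∉ K_min} Δ_m > 0. Let ŵ_m = exp(−IC_m/2) / Σ_{s=1}^M exp(−IC_s/2). Then Σ_{m ∈ K_min} ŵ_m − 1 = O_p(e^{−n Δ° / 2}), and ŵ_m = O_p(e^{−n Δ_m / 2}) for every m ∉ K_min. -/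

import Mathlib

open MeasureTheory Filter Set

open scoped Classical

/-- concentration of smoothed AIC weights when several models may tie
for the smallest KLIC.  If `IC_m − IC_{m*} = (n+1)Δ_m + 2(p_m − p_{m*}) + ε_{m,n}`
with `ε_{m,n} = O_p(1)` and `Δ° = min_{m ∉ K_min} Δ_m > 0`, where
`K_min = {m : Δ_m = 0}`, then `Σ_{m ∈ K_min} ŵ_m − 1 = O_p(e^{−nΔ°/2})` and
`ŵ_m = O_p(e^{−nΔ_m/2})` for every `m ∉ K_min`. -/
theorem saic_weights_tied_klic
    {Ω : Type*} [MeasurableSpace Ω] (μ : Measure Ω) [IsProbabilityMeasure μ]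
    (M : ℕ) (IC : ℕ → Fin M → Ω → ℝ)
    (Δ : Fin M → ℝ) (p : Fin M → ℕ) (mstar : Fin M)
    (hΔstar : Δ mstar = 0)
    (hΔnonneg : ∀ m, 0 ≤ Δ m)
    (heps : ∀ m : Fin M, ∀ δ > (0 : ℝ), ∃ K : ℝ, ∀ n : ℕ,
      μ {ω | K < |IC n m ω - IC n mstar ω -
        ((n + 1 : ℝ) * Δ m + 2 * ((p m : ℝ) - (p mstar : ℝ)))|} ≤
        ENNReal.ofReal δ)
    (what : ℕ → Fin M → Ω → ℝ)
    (hwhat : ∀ n m ω, what n m ω =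
      Real.exp (-(IC n m ω) / 2) / ∑ s, Real.exp (-(IC n s ω) / 2))
    (Δcirc : ℝ)
    (hΔcirc : IsLeast {d | ∃ m, Δ m ≠ 0 ∧ d = Δ m} Δcirc)
    (hΔcircpos : 0 < Δcirc) :
    (∀ δ > (0 : ℝ), ∃ K : ℝ, ∀ n : ℕ,
      μ {ω | K * Real.exp (-(n * Δcirc) / 2) <
        |(∑ m ∈ Finset.univ.filter (fun m => Δ m = 0), what n m ω) - 1|} ≤
        ENNReal.ofReal δ) ∧
    (∀ m : Fin M, Δ m ≠ 0 → ∀ δ > (0 : ℝ), ∃ K : ℝ, ∀ n : ℕ,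
      μ {ω | K * Real.exp (-(n * Δ m) / 2) < |what n m ω|} ≤
        ENNReal.ofReal δ) := by
  classical
  have hM : 0 < M := mstar.pos
  set E : ℕ → Fin M → Ω → ℝ := fun n m ω =>
    IC n m ω - IC n mstar ω -
      ((n + 1 : ℝ) * Δ m + 2 * ((p m : ℝ) - (p mstar : ℝ))) with hE
  have hSpos : ∀ (n : ℕ) (ω : Ω), 0 < ∑ s, Real.exp (-(IC n s ω) / 2) :=
    fun n ω => Finset.sum_pos (fun s _ => Real.exp_pos _) ⟨mstar, Finset.mem_univ _⟩
  have hw_nonneg : ∀ n m ω, 0 ≤ what n m ω := fun n m ω => by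
    rw [hwhat]; exact div_nonneg (Real.exp_pos _).le (hSpos n ω).le
  have hw_le : ∀ n m ω, what n m ω ≤ Real.exp ((IC n mstar ω - IC n m ω) / 2) := by
    intro n m ω
    rw [hwhat]
    have h1 : Real.exp (-(IC n mstar ω) / 2) ≤ ∑ s, Real.exp (-(IC n s ω) / 2) :=
      Finset.single_le_sum (f := fun s => Real.exp (-(IC n s ω) / 2))
        (fun s _ => (Real.exp_pos _).le) (Finset.mem_univ mstar)
    have h2 : Real.exp (-(IC n m ω) / 2) / (∑ s, Real.exp (-(IC n s ω) / 2))
        ≤ Real.exp (-(IC n m ω) / 2) / Real.exp (-(IC n mstar ω) / 2) :=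
      div_le_div_of_nonneg_left (Real.exp_pos _).le (Real.exp_pos _) h1
    rw [← Real.exp_sub] at h2
    refine h2.trans_eq ?_
    congr 1
    ring
  have key : ∀ (K : ℝ) (n : ℕ) (m : Fin M) (ω : Ω), |E n m ω| ≤ K →
      what n m ω ≤ Real.exp (K / 2 + |(p m : ℝ) - (p mstar : ℝ)|) *
        Real.exp (-((n : ℝ) * Δ m) / 2) := by
    intro K n m ω h
    refine (hw_le n m ω).trans ?_
    rw [← Real.exp_add]
    apply Real.exp_le_exp.2
    have h1 := (abs_le.1 h).1
    have h2 := neg_abs_le ((p m : ℝ) - (p mstar : ℝ))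
    have h3 := hΔnonneg m
    have h4 : IC n m ω - IC n mstar ω =
        ((n : ℝ) + 1) * Δ m + 2 * ((p m : ℝ) - (p mstar : ℝ)) + E n m ω := by
      simp only [hE]; ring
    have h5 : ((n : ℝ) + 1) * Δ m = (n : ℝ) * Δ m + Δ m := by ring
    linarith
  constructor
  · intro δ hδ
    have hδM : (0 : ℝ) < δ / M := div_pos hδ (by exact_mod_cast hM)
    choose Kf hKf using fun m => heps m (δ / M) hδM
    set T := Finset.univ.filter (fun m => Δ m ≠ 0) with hT
    refine ⟨∑ m ∈ T, Real.exp (Kf m / 2 + |(p m : ℝ) - (p mstar : ℝ)|), fun n => ?_⟩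
    have hsub : {ω | (∑ m ∈ T, Real.exp (Kf m / 2 + |(p m : ℝ) - (p mstar : ℝ)|)) *
          Real.exp (-((n : ℝ) * Δcirc) / 2) <
          |(∑ m ∈ Finset.univ.filter (fun m => Δ m = 0), what n m ω) - 1|} ⊆
        ⋃ m ∈ T, {ω | Kf m < |E n m ω|} := by
      intro ω hω
      by_contra hc
      simp only [mem_iUnion, mem_setOf_eq, not_exists, not_lt] at hc hω
      have hsum1 : ∑ m, what n m ω = 1 := by
        simp only [hwhat]
        rw [← Finset.sum_div, div_self (hSpos n ω).ne']
      have hsplit : (∑ m ∈ Finset.univ.filter (fun m => Δ m = 0), what n m ω)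
          + ∑ m ∈ T, what n m ω = 1 := by
        rw [← hsum1, hT]
        exact Finset.sum_filter_add_sum_filter_not _ _ _
      have habs : |(∑ m ∈ Finset.univ.filter (fun m => Δ m = 0), what n m ω) - 1|
          = ∑ m ∈ T, what n m ω := by
        have h6 : (∑ m ∈ Finset.univ.filter (fun m => Δ m = 0), what n m ω) - 1
            = -(∑ m ∈ T, what n m ω) := by linarith
        rw [h6, abs_neg, abs_of_nonneg (Finset.sum_nonneg fun m _ => hw_nonneg n m ω)]
      have hbound : ∑ m ∈ T, what n m ω ≤
          (∑ m ∈ T, Real.exp (Kf m / 2 + |(p m : ℝ) - (p mstar : ℝ)|)) *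
            Real.exp (-((n : ℝ) * Δcirc) / 2) := by
        rw [Finset.sum_mul]
        refine Finset.sum_le_sum fun m hm => ?_
        have hΔm : Δ m ≠ 0 := (Finset.mem_filter.1 hm).2
        refine (key (Kf m) n m ω (hc m hm)).trans ?_
        refine mul_le_mul_of_nonneg_left ?_ (Real.exp_pos _).le
        apply Real.exp_le_exp.2
        have hle : Δcirc ≤ Δ m := hΔcirc.2 ⟨m, hΔm, rfl⟩
        have h7 : (n : ℝ) * Δcirc ≤ (n : ℝ) * Δ m :=
          mul_le_mul_of_nonneg_left hle (Nat.cast_nonneg n)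
        linarith
      rw [habs] at hω
      linarith
    calc μ _ ≤ μ (⋃ m ∈ T, {ω | Kf m < |E n m ω|}) := measure_mono hsub
      _ ≤ ∑ m ∈ T, μ {ω | Kf m < |E n m ω|} := measure_biUnion_finset_le _ _
      _ ≤ ∑ _m ∈ T, ENNReal.ofReal (δ / M) := Finset.sum_le_sum (fun m _ => hKf m n)
      _ = T.card • ENNReal.ofReal (δ / M) := Finset.sum_const _
      _ ≤ M • ENNReal.ofReal (δ / M) := by
          refine nsmul_le_nsmul_left ?_ ?_ |>.trans_eq rfl
          · exact zero_le
          · exact (Finset.card_filter_le _ _).trans (by simp)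
      _ = ENNReal.ofReal δ := by
          rw [nsmul_eq_mul, ← ENNReal.ofReal_natCast,
            ← ENNReal.ofReal_mul (by positivity)]
          congr 1
          field_simp
  · intro m hm δ hδ
    obtain ⟨K₀, hK₀⟩ := heps m δ hδ
    refine ⟨Real.exp (K₀ / 2 + |(p m : ℝ) - (p mstar : ℝ)|), fun n => ?_⟩
    refine le_trans (measure_mono ?_) (hK₀ n)
    intro ω hω
    simp only [mem_setOf_eq] at hω ⊢
    by_contra hc
    push_neg at hc
    have h8 := key K₀ n m ω hc
    rw [abs_of_nonneg (hw_nonneg n m ω)] at hω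
    linarith
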